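/- Let f be a polynomial with complex coefficients, r₀ > 0, and t₀ ∈ ℝ with Im f(r₀·exp(i t₀)) = 0. Suppose Im α₀ < 0, where α₀ = i·r₀·exp(i t₀)·f′(r₀·exp(i t₀)). Then there exist ε > 0 and a differentiable function φ : (r₀ − ε, r₀ + ε) → ℝ with φ(r₀) = t₀ such that Im f(s·exp(i φ(s))) = 0 for all s ∈ (r₀ − ε, r₀ + ε), and the real-valued function g(s) = Re f(s·exp(i φ(s))) is strictly decreasing on (r₀ − ε, r₀ + ε). (A downcrossing point of the curve f_r moves continuously to the left along the real axis as r increases.) -/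

import Mathlib

open Complex Set Filter Topology

private lemma polyContDiffR (f : Polynomial ℂ) : ContDiff ℝ 1 (fun z : ℂ => f.eval z) := by
  have : ContDiff ℂ 1 (fun z : ℂ => f.eval z) := by
    induction f using Polynomial.induction_on' with
    | add p q hp hq => simpa using hp.add hq
    | monomial n a => simpa [Polynomial.eval_monomial] using contDiff_const.mul (contDiff_id.pow n)
  exact this.restrict_scalars ℝ

theorem downcrossing_moves_left (f : Polynomial ℂ) (r₀ : ℝ) (hr₀ : 0 < r₀) (t₀ : ℝ)
    (ht₀ : (f.eval ((r₀ : ℂ) * Complex.exp (Complex.I * t₀))).im = 0)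
    (α₀ : ℂ)
    (hα₀ : α₀ = Complex.I * r₀ * Complex.exp (Complex.I * t₀) *
        f.derivative.eval ((r₀ : ℂ) * Complex.exp (Complex.I * t₀)))
    (him : α₀.im < 0) :
    ∃ ε > (0 : ℝ), ∃ φ : ℝ → ℝ, φ r₀ = t₀ ∧
      DifferentiableOn ℝ φ (Set.Ioo (r₀ - ε) (r₀ + ε)) ∧
      (∀ s ∈ Set.Ioo (r₀ - ε) (r₀ + ε),
        (f.eval ((s : ℂ) * Complex.exp (Complex.I * φ s))).im = 0) ∧
      StrictAntiOn (fun s : ℝ => (f.eval ((s : ℂ) * Complex.exp (Complex.I * φ s))).re)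
        (Set.Ioo (r₀ - ε) (r₀ + ε)) := by
  classical
  set z₀ : ℂ := (r₀ : ℂ) * Complex.exp (Complex.I * t₀) with hz₀def
  set d₀ : ℂ := f.derivative.eval z₀ with hd₀def
  set Z : ℝ × ℝ → ℂ := fun p => (p.1 : ℂ) * Complex.exp (Complex.I * p.2) with hZdef
  set G : ℝ × ℝ → ℝ × ℝ := fun p => (p.1, (f.eval (Z p)).im) with hGdef
  set p₀ : ℝ × ℝ := (r₀, t₀) with hp₀def
  set a : ℝ := (d₀ * Complex.exp (Complex.I * t₀)).im with hadef
  set b : ℝ := α₀.im with hbdef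
  have hb : b ≠ 0 := ne_of_lt him
  -- the derivative of G as a continuous linear equivalence
  set M₁ : ℝ × ℝ →L[ℝ] ℝ × ℝ := (ContinuousLinearMap.fst ℝ ℝ ℝ).prod
      (a • ContinuousLinearMap.fst ℝ ℝ ℝ + b • ContinuousLinearMap.snd ℝ ℝ ℝ) with hM₁def
  set M₂ : ℝ × ℝ →L[ℝ] ℝ × ℝ := (ContinuousLinearMap.fst ℝ ℝ ℝ).prod
      (b⁻¹ • (ContinuousLinearMap.snd ℝ ℝ ℝ - a • ContinuousLinearMap.fst ℝ ℝ ℝ)) with hM₂def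
  have hleftinv : Function.LeftInverse M₂ M₁ := by
    rintro ⟨x, y⟩
    simp [hM₁def, hM₂def, ContinuousLinearMap.prod_apply]
    field_simp
  have hrightinv : Function.RightInverse M₂ M₁ := by
    rintro ⟨x, y⟩
    simp [hM₁def, hM₂def, ContinuousLinearMap.prod_apply]
    field_simp
    ring
  set A : (ℝ × ℝ) ≃L[ℝ] (ℝ × ℝ) := ContinuousLinearEquiv.equivOfInverse M₁ M₂ hleftinv hrightinv
    with hAdef
  -- G is continuously differentiable
  have hZc : ContDiff ℝ 1 Z := by
    apply ContDiff.mul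
    · exact Complex.ofRealCLM.contDiff.comp contDiff_fst
    · exact (contDiff_const.mul (Complex.ofRealCLM.contDiff.comp contDiff_snd)).cexp
  have hGc : ContDiff ℝ 1 G :=
    contDiff_fst.prodMk (Complex.imCLM.contDiff.comp ((polyContDiffR f).comp hZc))
  -- derivative of G at p₀
  have hA1 : HasFDerivAt (fun p : ℝ × ℝ => ((p.1 : ℝ) : ℂ))
      (Complex.ofRealCLM.comp (ContinuousLinearMap.fst ℝ ℝ ℝ)) p₀ :=
    (Complex.ofRealCLM.comp (ContinuousLinearMap.fst ℝ ℝ ℝ)).hasFDerivAt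
  have hinner : HasFDerivAt (fun p : ℝ × ℝ => Complex.I * (p.2 : ℂ))
      (Complex.I • (Complex.ofRealCLM.comp (ContinuousLinearMap.snd ℝ ℝ ℝ))) p₀ :=
    ((Complex.ofRealCLM.comp (ContinuousLinearMap.snd ℝ ℝ ℝ)).hasFDerivAt).const_mul Complex.I
  have hexp1 := ((Complex.hasDerivAt_exp (Complex.I * t₀)).hasFDerivAt.restrictScalars ℝ).comp p₀
      hinner
  have hmul := hA1.mul hexp1
  have hfz := ((f.hasDerivAt (Z p₀)).hasFDerivAt.restrictScalars ℝ)
  have hcomp := hfz.comp p₀ (by exact hmul)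
  have hIm := (Complex.imCLM.hasFDerivAt (x := f.eval (Z p₀))).comp p₀ hcomp
  have hGA : HasFDerivAt G (A : (ℝ × ℝ) →L[ℝ] (ℝ × ℝ)) p₀ := by
    have hprod := (hasFDerivAt_fst (p := p₀)).prodMk hIm
    refine hprod.congr_fderiv ?_
    apply ContinuousLinearMap.ext
    rintro ⟨x, y⟩
    simp [hAdef, hM₁def, hadef, hbdef, hα₀, hZdef, hp₀def, hd₀def, hz₀def,
      ContinuousLinearMap.prod_apply, Complex.add_im, Complex.mul_im, Complex.mul_re,
      Complex.ofReal_re, Complex.ofReal_im, Complex.I_re, Complex.I_im]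
    ring
  -- inverse function theorem
  set inv : ℝ × ℝ → ℝ × ℝ :=
    (hGc.contDiffAt.hasStrictFDerivAt' hGA one_ne_zero).localInverse G A p₀ with hinvdef
  have hstrict := hGc.contDiffAt.hasStrictFDerivAt' hGA one_ne_zero
  have hGp₀ : G p₀ = (r₀, 0) := by simp [hGdef, hZdef, hp₀def, ← hz₀def, ht₀]
  have hinvCD : ContDiffAt ℝ 1 inv (r₀, 0) := by
    rw [← hGp₀]
    exact ContDiffAt.to_localInverse hGc.contDiffAt hGA one_ne_zero
  have hleft : inv (r₀, 0) = p₀ := by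
    rw [← hGp₀]
    exact (hGc.contDiffAt.hasStrictFDerivAt' hGA one_ne_zero).localInverse_apply_image
  -- define φ
  set φ : ℝ → ℝ := fun s => (inv (s, 0)).2 with hφdef
  have hφr₀ : φ r₀ = t₀ := by rw [hφdef]; simp [hleft, hp₀def]
  -- eventual facts near r₀
  have hjt : Filter.Tendsto (fun s : ℝ => ((s, 0) : ℝ × ℝ)) (𝓝 r₀) (𝓝 (r₀, 0)) :=
    (continuous_id.prodMk continuous_const).tendsto r₀
  have E1 : ∀ᶠ s : ℝ in 𝓝 r₀, G (inv (s, 0)) = (s, 0) := by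
    have h := (hGc.contDiffAt.hasStrictFDerivAt' hGA one_ne_zero).eventually_right_inverse
    rw [hGp₀] at h
    exact hjt.eventually h
  have E2 : ∀ᶠ s : ℝ in 𝓝 r₀, ContDiffAt ℝ 1 inv (s, 0) := by
    exact hjt.eventually (hinvCD.eventually (by simp))
  set W : ℝ → ℂ := fun s =>
    f.derivative.eval ((s : ℂ) * Complex.exp (Complex.I * φ s)) * Complex.exp (Complex.I * φ s)
    with hWdef
  have hφcont : ContinuousAt φ r₀ := by
    have h1 : ContinuousAt inv (r₀, 0) := hinvCD.continuousAt
    exact (continuous_snd.tendsto _).comp (Filter.Tendsto.comp h1 hjt)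
  have hWcont : ContinuousAt (fun s => (W s).re) r₀ := by
    have hec : ContinuousAt (fun s : ℝ => Complex.exp (Complex.I * φ s)) r₀ := by
      exact Complex.continuous_exp.continuousAt.comp
        ((continuous_const.mul Complex.continuous_ofReal).continuousAt.comp hφcont)
    have h2 : ContinuousAt (fun s : ℝ => (s : ℂ) * Complex.exp (Complex.I * φ s)) r₀ :=
      (Complex.continuous_ofReal.continuousAt).mul hec
    exact Complex.continuous_re.continuousAt.comp
      (((f.derivative.continuous_aeval.continuousAt.comp h2).mul hec))
  have hWr₀ : (W r₀).re < 0 := by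
    have hwr : α₀.im = r₀ * (W r₀).re := by
      rw [hα₀]
      simp [hWdef, hφr₀, ← hz₀def, ← hd₀def, Complex.mul_im, Complex.mul_re,
        Complex.I_re, Complex.I_im, Complex.ofReal_re, Complex.ofReal_im]
      ring
    nlinarith [hwr, him]
  have E3 : ∀ᶠ s : ℝ in 𝓝 r₀, (W s).re < 0 :=
    hWcont.eventually_lt_const hWr₀ |>.mono (fun _ h => h)
  -- pick ε
  obtain ⟨ε, hε, hball⟩ := Metric.eventually_nhds_iff.1 ((E1.and E2).and E3)
  have hmem : ∀ s ∈ Set.Ioo (r₀ - ε) (r₀ + ε),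
      (G (inv (s, 0)) = (s, 0) ∧ ContDiffAt ℝ 1 inv (s, 0)) ∧ (W s).re < 0 := by
    intro s hs
    apply hball
    rw [Real.dist_eq, abs_sub_lt_iff]
    exact ⟨by linarith [hs.2], by linarith [hs.1]⟩
  have him0 : ∀ s ∈ Set.Ioo (r₀ - ε) (r₀ + ε),
      (f.eval ((s : ℂ) * Complex.exp (Complex.I * φ s))).im = 0 := by
    intro s hs
    have h1 := (hmem s hs).1.1
    have hfst : (inv (s, 0)).1 = s := congrArg Prod.fst h1
    have hsnd : (f.eval (Z (inv (s, 0)))).im = 0 := congrArg Prod.snd h1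
    rw [hZdef] at hsnd
    simpa [hφdef, hfst] using hsnd
  have key : ∀ s ∈ Set.Ioo (r₀ - ε) (r₀ + ε), ∃ dR : ℝ,
      HasDerivAt (fun u : ℝ => (f.eval ((u : ℂ) * Complex.exp (Complex.I * φ u))).re) dR s ∧
      dR < 0 := by
    intro s hs
    obtain ⟨⟨h1, h2⟩, h3⟩ := hmem s hs
    have hd : DifferentiableAt ℝ (fun s : ℝ => inv (s, 0)) s :=
      (h2.differentiableAt one_ne_zero).comp s (differentiableAt_id.prodMk (differentiableAt_const 0))
    have hφd : HasDerivAt φ (deriv φ s) s := (hd.snd).hasDerivAt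
    set c := deriv φ s with hcdef
    have hφℂ : HasDerivAt (fun u : ℝ => ((φ u : ℝ) : ℂ)) (c : ℂ) s := hφd.ofReal_comp
    have hIφ : HasDerivAt (fun u : ℝ => Complex.I * (φ u : ℂ)) (Complex.I * c) s :=
      hφℂ.const_mul Complex.I
    have hexpd : HasDerivAt (fun u : ℝ => Complex.exp (Complex.I * φ u))
        (Complex.exp (Complex.I * φ s) * (Complex.I * c)) s := hIφ.cexp
    have hu1 : HasDerivAt (fun u : ℝ => ((u : ℝ) : ℂ)) 1 s := by
      exact (hasDerivAt_id s).ofReal_comp.congr_deriv (by simp)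
    have hzc := hu1.mul hexpd
    have hP := ((f.hasDerivAt ((s : ℂ) * Complex.exp (Complex.I * φ s))).hasFDerivAt.restrictScalars ℝ)
    have hF := hP.comp_hasDerivAt s hzc
    set w : ℂ := W s with hwdef
    set D : ℂ := w + ((s * c : ℝ) : ℂ) * (Complex.I * w) with hDdef
    have hF' : HasDerivAt (fun u : ℝ => f.eval ((u : ℂ) * Complex.exp (Complex.I * φ u))) D s := by
      refine hF.congr_deriv ?_
      simp [hDdef, hwdef, hWdef, smul_eq_mul]
      ring
    have hIm0 : D.im = 0 := by
      have hImd := (Complex.imCLM.hasFDerivAt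
        (x := f.eval ((s : ℂ) * Complex.exp (Complex.I * φ s)))).comp_hasDerivAt s hF'
      have heq : (fun u : ℝ => (f.eval ((u : ℂ) * Complex.exp (Complex.I * φ u))).im)
          =ᶠ[𝓝 s] fun _ => (0 : ℝ) := by
        filter_upwards [Ioo_mem_nhds hs.1 hs.2] with u hu using him0 u hu
      have h0 : HasDerivAt (fun _ : ℝ => (0 : ℝ)) (Complex.imCLM D) s :=
        hImd.congr_of_eventuallyEq heq.symm
      have := h0.unique (hasDerivAt_const s 0)
      simpa using this
    have hRe : HasDerivAt (fun u : ℝ => (f.eval ((u : ℂ) * Complex.exp (Complex.I * φ u))).re)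
        (Complex.reCLM D) s := (Complex.reCLM.hasFDerivAt
          (x := f.eval ((s : ℂ) * Complex.exp (Complex.I * φ s)))).comp_hasDerivAt s hF'
    refine ⟨Complex.reCLM D, hRe, ?_⟩
    have e1 : D.im = w.im + (s * c) * w.re := by
      simp [hDdef, Complex.add_im, Complex.mul_im, Complex.I_re, Complex.I_im,
        Complex.ofReal_re, Complex.ofReal_im]
      try ring
    have e2 : (Complex.reCLM D : ℝ) = w.re - (s * c) * w.im := by
      simp [hDdef, Complex.add_re, Complex.mul_re, Complex.I_re, Complex.I_im,
        Complex.ofReal_re, Complex.ofReal_im]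
      try ring
    rw [e1] at hIm0
    rw [e2]
    have himeq : w.im = -(s * c) * w.re := by linarith
    rw [himeq]
    nlinarith [h3, sq_nonneg (s * c),
      mul_nonneg (sq_nonneg (s * c)) (le_of_lt (neg_pos.mpr h3))]
  refine ⟨ε, hε, φ, hφr₀, ?_, ?_, ?_⟩
  · -- differentiability
    intro s hs
    have h2 := (hmem s hs).1.2
    have hd : DifferentiableAt ℝ (fun s : ℝ => inv (s, 0)) s :=
      (h2.differentiableAt one_ne_zero).comp s (differentiableAt_id.prodMk (differentiableAt_const 0))
    exact hd.snd.differentiableWithinAt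
  · -- Im = 0
    intro s hs
    have h1 := (hmem s hs).1.1
    have hfst : (inv (s, 0)).1 = s := congrArg Prod.fst h1
    have hsnd : (f.eval (Z (inv (s, 0)))).im = 0 := congrArg Prod.snd h1
    rw [hZdef] at hsnd
    simpa [hφdef, hfst] using hsnd
  · apply strictAntiOn_of_deriv_neg (convex_Ioo _ _)
    · intro s hs
      exact ((key s hs).choose_spec.1).continuousAt.continuousWithinAt
    · intro s hs
      rw [isOpen_Ioo.interior_eq] at hs
      obtain ⟨dR, hdR, hneg⟩ := key s hs
      rw [hdR.deriv]
      exact hneg
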